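/- Let P, Q, R ⊆ ℝ^d be nonempty polytopes with P + Q = R, and let c_1, …, c_d ∈ ℝ^d form a basis of ℝ^d. Define iterated face sets F^P_0 = P and F^P_i = argmax_{x ∈ F^P_{i-1}} c_iᵀx for i = 1, …, d, and analogously F^Q_i and F^R_i for Q and R. Then F^P_d, F^Q_d, and F^R_d are singletons {x^P}, {x^Q}, {x^R}, respectively, and x^P + x^Q = x^R. -/

import Mathlib

open Finset Pointwise

def IsPolytope {d : ℕ} (P : Set (Fin d → ℝ)) : Prop :=
  ∃ V : Finset (Fin d → ℝ), V.Nonempty ∧ P = convexHull ℝ (V : Set (Fin d → ℝ))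

noncomputable def suppFn {d : ℕ} (P : Set (Fin d → ℝ)) (c : Fin d → ℝ) : ℝ :=
  sSup ((fun x => ∑ m, c m * x m) '' P)

def HasExtFormOfSize {d : ℕ} (P : Set (Fin d → ℝ)) (m : ℕ) : Prop :=
  ∃ (e m' : ℕ) (A : Matrix (Fin m) (Fin e) ℝ) (b : Fin m → ℝ)
    (C : Matrix (Fin m') (Fin e) ℝ) (d' : Fin m' → ℝ)
    (π : (Fin e → ℝ) →ᵃ[ℝ] (Fin d → ℝ)),
    π '' {y | A.mulVec y ≤ b ∧ C.mulVec y = d'} = P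

noncomputable def xc {d : ℕ} (P : Set (Fin d → ℝ)) : ℕ :=
  sInf {m | HasExtFormOfSize P m}

def MaxoutComputes {d : ℕ} (k s : ℕ) (a : Fin s → Fin k → Fin d → ℝ)
    (w : Fin s → Fin k → Fin s → ℝ) (f : (Fin d → ℝ) → ℝ) : Prop :=
  ∃ (z : Fin s → (Fin d → ℝ) → ℝ) (hs : 0 < s),
    (∀ j x, IsGreatest (Set.range fun i : Fin k =>
        ∑ m, a j i m * x m +
        ∑ l ∈ Finset.univ.filter (fun l => l < j), w j i l * z l x) (z j x)) ∧
    f = z ⟨s - 1, Nat.sub_lt hs Nat.one_pos⟩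

def IsMaxoutNetwork {d : ℕ} (k s : ℕ) (f : (Fin d → ℝ) → ℝ) : Prop :=
  ∃ (a : Fin s → Fin k → Fin d → ℝ) (w : Fin s → Fin k → Fin s → ℝ),
    MaxoutComputes k s a w f

def IsMonotoneMaxoutNetwork {d : ℕ} (k s : ℕ) (f : (Fin d → ℝ) → ℝ) : Prop :=
  ∃ (a : Fin s → Fin k → Fin d → ℝ) (w : Fin s → Fin k → Fin s → ℝ),
    (∀ j i m, 0 ≤ a j i m) ∧ (∀ j i l, 0 ≤ w j i l) ∧ MaxoutComputes k s a w f

def epiSet {d : ℕ} (f : (Fin d → ℝ) → ℝ) : Set (Fin (d + 1) → ℝ) :=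
  {p | f (fun m => p m.castSucc) ≤ p (Fin.last d)}

def argmaxSet {d : ℕ} (c : Fin d → ℝ) (S : Set (Fin d → ℝ)) : Set (Fin d → ℝ) :=
  {x | x ∈ S ∧ ∀ y ∈ S, ∑ m, c m * y m ≤ ∑ m, c m * x m}

def iterFaces {d : ℕ} (c : Fin d → Fin d → ℝ) (S : Set (Fin d → ℝ)) : ℕ → Set (Fin d → ℝ)
  | 0 => S
  | i + 1 => if h : i < d then argmaxSet (c ⟨i, h⟩) (iterFaces c S i) else iterFaces c S i

noncomputable def vxc {d : ℕ} (P : Set (Fin d → ℝ)) : ℕ :=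
  sInf {m | ∃ Q R : Set (Fin d → ℝ), IsPolytope Q ∧ IsPolytope R ∧ P + Q = R ∧ m = xc Q + xc R}

def coneGen {d : ℕ} (S : Set (Fin d → ℝ)) : Set (Fin d → ℝ) :=
  ⋂₀ {K | S ⊆ K ∧ Convex ℝ K ∧ ∀ x ∈ K, ∀ t : ℝ, 0 < t → t • x ∈ K}

def polarCone {d : ℕ} (K : Set (Fin d → ℝ)) : Set (Fin d → ℝ) :=
  {z | ∀ y ∈ K, ∑ i, z i * y i ≤ 0}

private lemma argmax_compact_nonempty {d : ℕ} {S : Set (Fin d → ℝ)} (hS : IsCompact S)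
    (hne : S.Nonempty) (c : Fin d → ℝ) :
    IsCompact (argmaxSet c S) ∧ (argmaxSet c S).Nonempty := by
  have hcont : Continuous (fun x : Fin d → ℝ => ∑ m, c m * x m) := by continuity
  obtain ⟨x₀, hx₀S, hx₀'⟩ := hS.exists_isMaxOn hne hcont.continuousOn
  have hx₀ : ∀ y ∈ S, ∑ m, c m * y m ≤ ∑ m, c m * x₀ m := fun y hy => hx₀' hy
  have heq : argmaxSet c S =
      S ∩ (fun x : Fin d → ℝ => ∑ m, c m * x m) ⁻¹' {∑ m, c m * x₀ m} := by
    ext x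
    constructor
    · rintro ⟨hxS, hmax⟩
      exact ⟨hxS, le_antisymm (hx₀ x hxS) (hmax x₀ hx₀S)⟩
    · rintro ⟨hxS, hx⟩
      refine ⟨hxS, fun y hy => ?_⟩
      have := hx₀ y hy
      simp only [Set.mem_preimage, Set.mem_singleton_iff] at hx
      linarith
  constructor
  · rw [heq]
    exact hS.inter_right (isClosed_singleton.preimage hcont)
  · refine ⟨x₀, hx₀S, hx₀⟩

private lemma argmax_add {d : ℕ} {P Q : Set (Fin d → ℝ)} (c : Fin d → ℝ)
    (hp : (argmaxSet c P).Nonempty) (hq : (argmaxSet c Q).Nonempty) :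
    argmaxSet c (P + Q) = argmaxSet c P + argmaxSet c Q := by
  obtain ⟨p₀, hp₀P, hp₀⟩ := hp
  obtain ⟨q₀, hq₀Q, hq₀⟩ := hq
  have hlin : ∀ x y : Fin d → ℝ, ∑ m, c m * (x + y) m = (∑ m, c m * x m) + ∑ m, c m * y m := by
    intro x y
    simp [mul_add, Finset.sum_add_distrib]
  ext z
  constructor
  · rintro ⟨hz, hmax⟩
    rw [Set.mem_add] at hz
    obtain ⟨p, hpP, q, hqQ, rfl⟩ := hz
    have hsum : (∑ m, c m * p m) + ∑ m, c m * q m = (∑ m, c m * p₀ m) + ∑ m, c m * q₀ m := by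
      have h1 := hmax (p₀ + q₀) (Set.add_mem_add hp₀P hq₀Q)
      rw [hlin, hlin] at h1
      have h2 := hp₀ p hpP
      have h3 := hq₀ q hqQ
      linarith
    have hpeq : ∑ m, c m * p m = ∑ m, c m * p₀ m := by
      have h2 := hp₀ p hpP
      have h3 := hq₀ q hqQ
      linarith
    have hqeq : ∑ m, c m * q m = ∑ m, c m * q₀ m := by
      have h2 := hp₀ p hpP
      have h3 := hq₀ q hqQ
      linarith
    exact Set.add_mem_add ⟨hpP, fun y hy => hpeq ▸ hp₀ y hy⟩
      ⟨hqQ, fun y hy => hqeq ▸ hq₀ y hy⟩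
  · rintro hz
    rw [Set.mem_add] at hz
    obtain ⟨p, ⟨hpP, hpmax⟩, q, ⟨hqQ, hqmax⟩, rfl⟩ := hz
    refine ⟨Set.add_mem_add hpP hqQ, fun y hy => ?_⟩
    rw [Set.mem_add] at hy
    obtain ⟨a, haP, b, hbQ, rfl⟩ := hy
    rw [hlin, hlin]
    exact add_le_add (hpmax a haP) (hqmax b hbQ)

private lemma iter_inv {d : ℕ} (c : Fin d → Fin d → ℝ) {P Q : Set (Fin d → ℝ)}
    (hPc : IsCompact P) (hPn : P.Nonempty) (hQc : IsCompact Q) (hQn : Q.Nonempty) :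
    ∀ i, IsCompact (iterFaces c P i) ∧ (iterFaces c P i).Nonempty ∧
      IsCompact (iterFaces c Q i) ∧ (iterFaces c Q i).Nonempty ∧
      iterFaces c (P + Q) i = iterFaces c P i + iterFaces c Q i := by
  intro i
  induction i with
  | zero => exact ⟨hPc, hPn, hQc, hQn, rfl⟩
  | succ n ih =>
    obtain ⟨h1, h2, h3, h4, h5⟩ := ih
    by_cases h : n < d
    · simp only [iterFaces, dif_pos h]
      obtain ⟨hc1, hn1⟩ := argmax_compact_nonempty h1 h2 (c ⟨n, h⟩)
      obtain ⟨hc2, hn2⟩ := argmax_compact_nonempty h3 h4 (c ⟨n, h⟩)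
      exact ⟨hc1, hn1, hc2, hn2, by rw [h5, argmax_add _ hn1 hn2]⟩
    · simp only [iterFaces, dif_neg h]
      exact ⟨h1, h2, h3, h4, h5⟩

private lemma iter_subset {d : ℕ} (c : Fin d → Fin d → ℝ) (S : Set (Fin d → ℝ)) :
    ∀ {i j : ℕ}, i ≤ j → iterFaces c S j ⊆ iterFaces c S i := by
  intro i j hij
  induction j with
  | zero => simp_all
  | succ n ih =>
    rcases Nat.lt_or_ge i (n + 1) with h | h
    · have hsub : iterFaces c S (n + 1) ⊆ iterFaces c S n := by
        by_cases hn : n < d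
        · simp only [iterFaces, dif_pos hn]
          exact fun x hx => hx.1
        · simp only [iterFaces, dif_neg hn]
          exact subset_rfl
      exact (ih (Nat.lt_succ_iff.mp h)).trans' hsub
    · have : i = n + 1 := le_antisymm hij h
      subst this
      exact subset_rfl

private lemma eq_of_mem_iter {d : ℕ} (c : Fin d → Fin d → ℝ)
    (hc : Submodule.span ℝ (Set.range c) = ⊤) (S : Set (Fin d → ℝ))
    {x y : Fin d → ℝ} (hx : x ∈ iterFaces c S d) (hy : y ∈ iterFaces c S d) : x = y := by
  have hdot : ∀ i : Fin d, ∑ m, c i m * x m = ∑ m, c i m * y m := by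
    intro i
    have hxi : x ∈ iterFaces c S (i.val + 1) := iter_subset c S i.isLt hx
    have hyi : y ∈ iterFaces c S (i.val + 1) := iter_subset c S i.isLt hy
    simp only [iterFaces, dif_pos i.isLt, Fin.eta] at hxi hyi
    exact le_antisymm (hyi.2 x hxi.1) (hxi.2 y hyi.1)
  set u := x - y with hu
  let φ : (Fin d → ℝ) →ₗ[ℝ] ℝ :=
    { toFun := fun w => ∑ m, w m * u m
      map_add' := by intro a b; simp [add_mul, Finset.sum_add_distrib]
      map_smul' := by intro r a; simp [mul_assoc, Finset.mul_sum] }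
  have hker : Set.range c ⊆ (LinearMap.ker φ : Set (Fin d → ℝ)) := by
    rintro _ ⟨i, rfl⟩
    have : ∑ m, c i m * u m = 0 := by
      have := hdot i
      simp only [hu, Pi.sub_apply, mul_sub, Finset.sum_sub_distrib]
      linarith
    simpa [φ, mul_comm] using this
  have htop : (⊤ : Submodule ℝ (Fin d → ℝ)) ≤ LinearMap.ker φ := by
    rw [← hc]
    exact Submodule.span_le.mpr hker
  have hu0 : φ u = 0 := htop (Submodule.mem_top) |> LinearMap.mem_ker.mp
  have : ∀ m, u m = 0 := by
    have hsum : ∑ m, u m * u m = 0 := hu0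
    intro m
    have := (Finset.sum_eq_zero_iff_of_nonneg
      (fun m _ => mul_self_nonneg (u m))).mp hsum m (Finset.mem_univ m)
    nlinarith [this]
  have hz : u = 0 := funext this
  exact sub_eq_zero.mp hz

/-- for polytopes `P + Q = R` and a basis `c_1, …, c_d` of `ℝ^d`, the iterated
(lexicographic) face sets `F^P_d`, `F^Q_d`, `F^R_d` are singletons `{xP}`, `{xQ}`, `{xR}`
with `xP + xQ = xR`. -/
theorem lex_faces_singletons {d : ℕ} (P Q R : Set (Fin d → ℝ))
    (hP : IsPolytope P) (hQ : IsPolytope Q) (hR : IsPolytope R) (hPQR : P + Q = R)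
    (c : Fin d → Fin d → ℝ)
    (hc : LinearIndependent ℝ c ∧ Submodule.span ℝ (Set.range c) = ⊤) :
    ∃ xP xQ xR : Fin d → ℝ,
      iterFaces c P d = {xP} ∧ iterFaces c Q d = {xQ} ∧ iterFaces c R d = {xR} ∧
      xP + xQ = xR := by
  obtain ⟨VP, hVPne, rfl⟩ := hP
  obtain ⟨VQ, hVQne, rfl⟩ := hQ
  have hPc : IsCompact (convexHull ℝ (VP : Set (Fin d → ℝ))) :=
    (VP : Set (Fin d → ℝ)).toFinite.isCompact_convexHull (𝕜 := ℝ)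
  have hQc : IsCompact (convexHull ℝ (VQ : Set (Fin d → ℝ))) :=
    (VQ : Set (Fin d → ℝ)).toFinite.isCompact_convexHull (𝕜 := ℝ)
  have hPn : (convexHull ℝ (VP : Set (Fin d → ℝ))).Nonempty :=
    (hVPne.to_set.mono (subset_convexHull ℝ _))
  have hQn : (convexHull ℝ (VQ : Set (Fin d → ℝ))).Nonempty :=
    (hVQne.to_set.mono (subset_convexHull ℝ _))
  obtain ⟨_, hPdn, _, hQdn, hRd⟩ := iter_inv c hPc hPn hQc hQn d
  obtain ⟨xP, hxP⟩ := hPdn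
  obtain ⟨xQ, hxQ⟩ := hQdn
  have hPsing : iterFaces c _ d = ({xP} : Set (Fin d → ℝ)) :=
    Set.eq_singleton_iff_unique_mem.mpr ⟨hxP, fun y hy => eq_of_mem_iter c hc.2 _ hy hxP⟩
  have hQsing : iterFaces c _ d = ({xQ} : Set (Fin d → ℝ)) :=
    Set.eq_singleton_iff_unique_mem.mpr ⟨hxQ, fun y hy => eq_of_mem_iter c hc.2 _ hy hxQ⟩
  refine ⟨xP, xQ, xP + xQ, hPsing, hQsing, ?_, rfl⟩
  rw [← hPQR, hRd, hPsing, hQsing, Set.singleton_add_singleton]
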